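/- Let n ≥ 1 and D ≥ 1 be integers, and let (A_m)_{m∈ℕ} be a sequence of complex n×n matrices such that for every m there is an integer k with 1 ≤ k ≤ D and A_m^k = 1 (i.e. each A_m has finite multiplicative order at most D), and such that A_m converges entrywise to the identity matrix. Then there exists m₀ such that A_m = 1 for all m ≥ m₀. -/

import Mathlib

open Filter Topology

/-- A sequence of complex `n × n` matrices of multiplicative order at most `D` converging
(entrywise) to the identity matrix is eventually equal to the identity. -/
theorem stmt3 (n D : ℕ) (hn : 1 ≤ n) (hD : 1 ≤ D)
    (A : ℕ → Matrix (Fin n) (Fin n) ℂ)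
    (hord : ∀ m, ∃ k, 1 ≤ k ∧ k ≤ D ∧ A m ^ k = 1)
    (hconv : Tendsto A atTop (𝓝 (1 : Matrix (Fin n) (Fin n) ℂ))) :
    ∃ m₀ : ℕ, ∀ m ≥ m₀, A m = 1 := by
  set N := D.factorial with hN
  have hNpos : 0 < N := D.factorial_pos
  -- every A m satisfies A m ^ N = 1
  have hpowN : ∀ m, A m ^ N = 1 := by
    intro m
    obtain ⟨k, hk1, hkD, hAk⟩ := hord m
    obtain ⟨c, hc⟩ := Nat.dvd_factorial hk1 hkD
    rw [hN, hc, pow_mul, hAk, one_pow]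
  -- the geometric sums
  set S : ℕ → Matrix (Fin n) (Fin n) ℂ := fun m => ∑ i ∈ Finset.range N, A m ^ i with hS
  have hgeo : ∀ m, S m * (A m - 1) = 0 := by
    intro m
    rw [hS]
    simp only [geom_sum_mul, hpowN, sub_self]
  -- S m tends to N • 1
  have hStend : Tendsto S atTop (𝓝 (∑ i ∈ Finset.range N, (1 : Matrix (Fin n) (Fin n) ℂ) ^ i)) := by
    apply tendsto_finset_sum
    intro i _
    exact hconv.pow i
  have hsum1 : (∑ i ∈ Finset.range N, (1 : Matrix (Fin n) (Fin n) ℂ) ^ i) = (N : ℂ) • 1 := by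
    rw [Finset.sum_congr rfl (fun i _ => one_pow i), Finset.sum_const, Finset.card_range, Nat.cast_smul_eq_nsmul]
  rw [hsum1] at hStend
  -- determinant tends to N ^ n ≠ 0
  have hdet : Tendsto (fun m => (S m).det) atTop (𝓝 (((N : ℂ) • (1 : Matrix (Fin n) (Fin n) ℂ)).det)) :=
    ((continuous_id.matrix_det).tendsto _).comp hStend
  have hdetval : ((N : ℂ) • (1 : Matrix (Fin n) (Fin n) ℂ)).det = (N : ℂ) ^ n := by
    simp [Matrix.det_smul]
  have hne : ((N : ℂ) • (1 : Matrix (Fin n) (Fin n) ℂ)).det ≠ 0 := by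
    rw [hdetval]
    exact pow_ne_zero _ (Nat.cast_ne_zero.mpr hNpos.ne')
  have hev : ∀ᶠ m in atTop, (S m).det ≠ 0 := hdet.eventually_ne hne
  obtain ⟨m₀, hm₀⟩ := eventually_atTop.mp hev
  refine ⟨m₀, fun m hm => ?_⟩
  have hunit : IsUnit (S m) := by
    rw [Matrix.isUnit_iff_isUnit_det]
    exact isUnit_iff_ne_zero.mpr (hm₀ m hm)
  have := hunit.mul_left_cancel (by rw [hgeo m, mul_zero] : S m * (A m - 1) = S m * 0)
  have h0 : A m - 1 = 0 := this
  exact sub_eq_zero.mp h0
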